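/- Let N ≥ 3, T > 0, and let ξ : [0,T] → ℝ^N be Hölder continuous with exponent α > 1/2. Define F(x,t) = ∫₀^t Φ(x-ξ(s), t-s) ds with Φ the heat kernel. Then for each fixed t ∈ (0,T), F(x,t) = (1/(N(N-2)ω_N)) |x-ξ(t)|^{2-N} + o(|x-ξ(t)|^{2-N}) as x → ξ(t), i.e., lim_{x→ξ(t)} |x-ξ(t)|^{N-2} F(x,t) = 1/(N(N-2)ω_N). -/

import Mathlib

open MeasureTheory Real Set Metric Filter Topology

noncomputable section

/-- The heat kernel on ℝ^N. -/
def heatKernel (N : ℕ) (x : EuclideanSpace ℝ (Fin N)) (t : ℝ) : ℝ :=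
  (4 * π * t) ^ (-(N : ℝ) / 2) * Real.exp (-‖x‖ ^ 2 / (4 * t))

/-- The time-integrated heat kernel along the curve ξ. -/
def Fsol (N : ℕ) (ξ : ℝ → EuclideanSpace ℝ (Fin N))
    (x : EuclideanSpace ℝ (Fin N)) (t : ℝ) : ℝ :=
  ∫ s in (0 : ℝ)..t, heatKernel N (x - ξ s) (t - s)


lemma heat_time_integral {N : ℕ} (hN : 3 ≤ N) :
    ∫ u in Ioi (0:ℝ), (4 * π * u) ^ (-(N : ℝ) / 2) * Real.exp (-1 / (4 * u)) =
      1 / ((N : ℝ) * ((N : ℝ) - 2)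
        * (volume (ball (0 : EuclideanSpace ℝ (Fin N)) 1)).toReal) := by
  have hN3 : (3:ℝ) ≤ (N:ℝ) := by exact_mod_cast hN
  have hΓpos : 0 < Real.Gamma ((N:ℝ)/2 - 1) := Real.Gamma_pos_of_pos (by linarith)
  -- substitution x ↦ x⁻¹
  have sub1 : ∫ u in Ioi (0:ℝ), (4 * π * u) ^ (-(N : ℝ) / 2) * Real.exp (-1 / (4 * u))
      = ∫ x in Ioi (0:ℝ), (4*π)^(-(N:ℝ)/2) * (x ^ ((N:ℝ)/2 - 2) * Real.exp (-(1/4) * x)) := by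
    rw [← integral_comp_rpow_Ioi
      (fun u => (4 * π * u) ^ (-(N : ℝ) / 2) * Real.exp (-1 / (4 * u)))
      (by norm_num : (-1:ℝ) ≠ 0)]
    refine setIntegral_congr_fun measurableSet_Ioi (fun x hx => ?_)
    have hx0 : (0:ℝ) < x := hx
    have hxinv : x ^ (-1:ℝ) = x⁻¹ := by rw [rpow_neg_one]
    rw [hxinv]
    have e1 : (4 * π * x⁻¹) ^ (-(N : ℝ) / 2)
        = (4*π)^(-(N:ℝ)/2) * x ^ ((N:ℝ)/2) := by
      rw [mul_rpow (by positivity) (by positivity), inv_rpow hx0.le,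
        ← rpow_neg hx0.le, neg_div, neg_neg]
    have e2 : (-1 : ℝ) / (4 * x⁻¹) = -(1/4) * x := by
      field_simp
    have e3 : |(-1:ℝ)| * x ^ ((-1:ℝ) - 1) = x ^ (-2:ℝ) := by
      norm_num
    rw [e1, e2, e3, smul_eq_mul]
    have e4 : x ^ (-2:ℝ) * x ^ ((N:ℝ)/2) = x ^ ((N:ℝ)/2 - 2) := by
      rw [← rpow_add hx0]; ring_nf
    calc x ^ (-2:ℝ) * ((4*π)^(-(N:ℝ)/2) * x ^ ((N:ℝ)/2) * Real.exp (-(1/4) * x))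
        = (4*π)^(-(N:ℝ)/2) * ((x ^ (-2:ℝ) * x ^ ((N:ℝ)/2)) * Real.exp (-(1/4) * x)) := by ring
      _ = _ := by rw [e4]
  rw [sub1, MeasureTheory.integral_const_mul]
  have sub2 : ∫ x in Ioi (0:ℝ), x ^ ((N:ℝ)/2 - 2) * Real.exp (-(1/4) * x)
      = ((1:ℝ)/4) ^ (-((N:ℝ)/2 - 1)) * Real.Gamma ((N:ℝ)/2 - 1) := by
    have := integral_rpow_mul_exp_neg_mul_rpow (p := 1) (q := (N:ℝ)/2 - 2) (b := 1/4)
      one_pos (by linarith) (by norm_num)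
    simp only [rpow_one] at this
    rw [this]
    norm_num
    ring_nf
  rw [sub2]
  -- volume of the ball
  haveI : Nonempty (Fin N) := ⟨⟨0, by omega⟩⟩
  rw [EuclideanSpace.volume_ball]
  have hcard : Fintype.card (Fin N) = N := Fintype.card_fin N
  rw [hcard]
  have hsq : (Real.sqrt π) ^ N = π ^ ((N:ℝ)/2) := by
    rw [sqrt_eq_rpow, ← rpow_natCast (π ^ ((1:ℝ)/2)) N, ← rpow_mul pi_pos.le]
    ring_nf
  have hΓ1 : Real.Gamma ((N:ℝ)/2 + 1) = ((N:ℝ)/2) * (((N:ℝ)/2 - 1) * Real.Gamma ((N:ℝ)/2 - 1)) := by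
    have h1 : (N:ℝ)/2 + 1 = ((N:ℝ)/2) + 1 := rfl
    rw [Real.Gamma_add_one (by linarith : (N:ℝ)/2 ≠ 0)]
    congr 1
    have h2 : (N:ℝ)/2 = ((N:ℝ)/2 - 1) + 1 := by ring
    rw [h2, Real.Gamma_add_one (by linarith : (N:ℝ)/2 - 1 ≠ 0)]
    norm_num
  have hnonneg : (0:ℝ) ≤ Real.sqrt π ^ N / Real.Gamma ((N:ℝ)/2 + 1) := by
    have := Real.Gamma_pos_of_pos (show (0:ℝ) < (N:ℝ)/2 + 1 by linarith)
    positivity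
  rw [ENNReal.toReal_mul, ENNReal.toReal_pow, ENNReal.toReal_ofReal (by norm_num : (0:ℝ) ≤ 1),
    one_pow, one_mul, ENNReal.toReal_ofReal hnonneg, hsq, hΓ1]
  -- now pure algebra
  have hπ : (0:ℝ) < π ^ ((N:ℝ)/2) := rpow_pos_of_pos pi_pos _
  have h4 : ((1:ℝ)/4) ^ (-((N:ℝ)/2 - 1)) = (4:ℝ) ^ ((N:ℝ)/2 - 1) := by
    rw [one_div, inv_rpow (by norm_num : (0:ℝ) ≤ 4), ← rpow_neg (by norm_num : (0:ℝ) ≤ 4),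
      neg_neg]
  have h4π : ((4:ℝ)*π)^(-(N:ℝ)/2) = (4:ℝ)^(-(N:ℝ)/2) * π^(-(N:ℝ)/2) := by
    rw [mul_rpow (by norm_num) pi_pos.le]
  have h44 : (4:ℝ)^(-(N:ℝ)/2) * (4:ℝ) ^ ((N:ℝ)/2 - 1) = 4⁻¹ := by
    rw [← rpow_add (by norm_num : (0:ℝ) < 4),
      show -(N:ℝ)/2 + ((N:ℝ)/2 - 1) = -1 by ring, rpow_neg_one]
  have hπneg : π^(-(N:ℝ)/2) = (π^((N:ℝ)/2))⁻¹ := by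
    rw [← rpow_neg pi_pos.le]; ring_nf
  rw [h4, h4π, hπneg, mul_mul_mul_comm, h44]
  have hNne : (N:ℝ) ≠ 0 := by linarith
  have hN2ne : (N:ℝ) - 2 ≠ 0 := by linarith
  field_simp
  ring

lemma holder_continuousOn {E : Type*} [NormedAddCommGroup E] {T α L : ℝ} (hα : 0 < α)
    (ξ : ℝ → E)
    (hH : ∀ a ∈ Icc (0:ℝ) T, ∀ b ∈ Icc (0:ℝ) T, ‖ξ a - ξ b‖ ≤ L * |a - b| ^ α) :
    ContinuousOn ξ (Icc 0 T) := by
  intro a ha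
  rw [ContinuousWithinAt, tendsto_iff_dist_tendsto_zero]
  have hb : Tendsto (fun b => L * |b - a| ^ α) (𝓝[Icc 0 T] a) (𝓝 0) := by
    have hc : Continuous (fun b : ℝ => L * |b - a| ^ α) := by
      apply continuous_const.mul
      apply Continuous.rpow_const (continuous_abs.comp (continuous_id.sub continuous_const))
      intro x; right; exact hα.le
    have h0 := (hc.continuousWithinAt (s := Icc 0 T) (x := a)).tendsto
    simpa [abs_zero, Real.zero_rpow hα.ne'] using h0
  apply squeeze_zero' (Eventually.of_forall fun b => dist_nonneg) _ hb
  filter_upwards [eventually_mem_nhdsWithin] with b hb'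
  rw [dist_eq_norm]
  exact hH b hb' a ha

lemma bound_cont {N : ℕ} : ContinuousOn
    (fun u:ℝ => (4*π*u) ^ (-(N:ℝ)/2) * Real.exp (-1/(16*u))) (Ioc 0 1) := by
  apply ContinuousOn.mul
  · apply ContinuousOn.rpow_const (continuous_const.mul continuous_id).continuousOn
    intro u hu; left; have := hu.1; simp only [Pi.mul_apply, id_eq]; positivity
  · apply Real.continuous_exp.comp_continuousOn
    apply ContinuousOn.div continuousOn_const (continuous_const.mul continuous_id).continuousOn
    intro u hu; have := hu.1; simp only [Pi.mul_apply, id_eq]; positivity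

lemma bound_integrable {N : ℕ} (hN : 3 ≤ N) :
    IntegrableOn (fun u : ℝ => (4*π*u) ^ (-(N:ℝ)/2) *
      (if u ≤ 1 then Real.exp (-1/(16*u)) else 1)) (Ioi 0) := by
  have hNr : (3:ℝ) ≤ (N:ℝ) := by exact_mod_cast hN
  rw [← Ioc_union_Ioi_eq_Ioi (zero_le_one : (0:ℝ) ≤ 1)]
  apply IntegrableOn.union
  · -- on Ioc 0 1 : bounded
    have hint1 : IntegrableOn
        (fun u:ℝ => (4*π*u) ^ (-(N:ℝ)/2) * Real.exp (-1/(16*u))) (Ioc 0 1) := by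
      apply Integrable.mono'
        (g := fun _ : ℝ => (4*π)^(-(N:ℝ)/2) * ((N.factorial : ℝ) * 16^N))
        (integrableOn_const measure_Ioc_lt_top.ne)
        (bound_cont.aestronglyMeasurable measurableSet_Ioc)
      rw [ae_restrict_iff' measurableSet_Ioc]
      refine Eventually.of_forall fun u hu => ?_
      obtain ⟨hu0, hu1⟩ := hu
      have h1 : (4*π*u) ^ (-(N:ℝ)/2) = (4*π)^(-(N:ℝ)/2) * u ^ (-(N:ℝ)/2) := by
        rw [mul_rpow (by positivity) hu0.le]
      have h2 : u ^ (-(N:ℝ)/2) ≤ u ^ (-(N:ℝ)) := by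
        apply rpow_le_rpow_of_exponent_ge hu0 hu1
        linarith
      have h3 : Real.exp (-1/(16*u)) ≤ (N.factorial : ℝ) * (16*u)^N := by
        have hx : (0:ℝ) < 1/(16*u) := by positivity
        have hexp : (1/(16*u))^N / (N.factorial : ℝ) ≤ Real.exp (1/(16*u)) := by
          calc (1/(16*u))^N / (N.factorial : ℝ)
              ≤ ∑ i ∈ Finset.range (N+1), (1/(16*u))^i / (i.factorial : ℝ) := by
                refine Finset.single_le_sum (f := fun i => (1/(16*u))^i / (i.factorial : ℝ))
                  (fun i _ => by positivity) (Finset.self_mem_range_succ N)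
            _ ≤ Real.exp (1/(16*u)) := Real.sum_le_exp_of_nonneg hx.le _
        rw [show (-1:ℝ)/(16*u) = -(1/(16*u)) by ring, Real.exp_neg]
        rw [inv_le_comm₀ (Real.exp_pos _) (by positivity)]
        calc ((N.factorial:ℝ) * (16*u)^N)⁻¹ = (1/(16*u))^N / (N.factorial : ℝ) := by
              rw [div_pow, one_pow]
              field_simp
            _ ≤ Real.exp (1/(16*u)) := hexp
      have h4 : u ^ (-(N:ℝ)) * ((N.factorial : ℝ) * (16*u)^N) = (N.factorial : ℝ) * 16^N := by
        rw [mul_pow, ← rpow_natCast u N]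
        rw [show u ^ (-(N:ℝ)) * ((N.factorial:ℝ) * ((16:ℝ)^N * u ^ (N:ℝ)))
            = (u ^ (-(N:ℝ)) * u ^ (N:ℝ)) * ((N.factorial:ℝ) * 16^N) by ring]
        rw [← rpow_add hu0, neg_add_cancel, rpow_zero, one_mul]
      have hnorm : ‖(4*π*u) ^ (-(N:ℝ)/2) * Real.exp (-1/(16*u))‖
          = (4*π*u) ^ (-(N:ℝ)/2) * Real.exp (-1/(16*u)) := by
        rw [Real.norm_eq_abs, abs_of_nonneg (by positivity)]
      rw [hnorm, h1, mul_assoc]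
      apply mul_le_mul_of_nonneg_left _ (by positivity)
      calc u ^ (-(N:ℝ)/2) * Real.exp (-1/(16*u))
          ≤ u ^ (-(N:ℝ)) * ((N.factorial : ℝ) * (16*u)^N) := by
            apply mul_le_mul h2 h3 (Real.exp_nonneg _) (by positivity)
        _ = (N.factorial : ℝ) * 16^N := h4
    apply hint1.congr_fun _ measurableSet_Ioc
    intro u hu
    simp only [if_pos hu.2]
  · -- on Ioi 1
    have hint : IntegrableOn (fun u:ℝ => (4*π)^(-(N:ℝ)/2) * u ^ (-(N:ℝ)/2)) (Ioi 1) := by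
      exact (integrableOn_Ioi_rpow_of_lt (by linarith : -(N:ℝ)/2 < -1) one_pos).const_mul _
    apply hint.congr_fun _ measurableSet_Ioi
    intro u hu
    have hu1 : (1:ℝ) < u := hu
    simp only [if_neg (not_le.mpr hu1), mul_one]
    rw [mul_rpow (by positivity) (by linarith : (0:ℝ) ≤ u)]

lemma heatKernel_rescale {N : ℕ} {r u : ℝ} (hr : 0 < r) (hu : 0 < u)
    (y : EuclideanSpace ℝ (Fin N)) :
    r ^ ((N:ℝ) - 2) * r ^ 2 * heatKernel N y (r^2 * u)
      = (4*π*u) ^ (-(N:ℝ)/2) * Real.exp (-‖y‖^2 / (4 * (r^2 * u))) := by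
  rw [heatKernel]
  rw [show (4*π*(r^2*u)) = (4*π*u) * r^2 by ring,
    mul_rpow (by positivity) (by positivity)]
  have h2 : (r^2 : ℝ) ^ (-(N:ℝ)/2) = r ^ (-(N:ℝ)) := by
    rw [← rpow_natCast r 2, ← rpow_mul hr.le]
    congr 1; ring
  rw [h2]
  have h3 : r ^ ((N:ℝ)-2) * r^2 * r ^ (-(N:ℝ)) = 1 := by
    rw [← rpow_natCast r 2, ← rpow_add hr, ← rpow_add hr]
    norm_num
  calc r ^ ((N:ℝ)-2) * r^2 * ((4*π*u) ^ (-(N:ℝ)/2) * r ^ (-(N:ℝ))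
        * Real.exp (-‖y‖^2 / (4 * (r^2 * u))))
      = (r ^ ((N:ℝ)-2) * r^2 * r ^ (-(N:ℝ))) * ((4*π*u) ^ (-(N:ℝ)/2)
        * Real.exp (-‖y‖^2 / (4 * (r^2 * u)))) := by ring
    _ = _ := by rw [h3, one_mul]


lemma Fsol_rescaled {N : ℕ} (ξ : ℝ → EuclideanSpace ℝ (Fin N)) {t : ℝ} (ht0 : 0 < t)
    {x : EuclideanSpace ℝ (Fin N)} (hx : 0 < ‖x - ξ t‖) :
    ‖x - ξ t‖ ^ ((N:ℝ) - 2) * Fsol N ξ x t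
      = ∫ u in Ioi (0:ℝ), Set.indicator (Ioc (0:ℝ) (t / ‖x - ξ t‖ ^ 2))
          (fun u => (4*π*u) ^ (-(N:ℝ)/2) *
            Real.exp (-‖x - ξ (t - ‖x - ξ t‖ ^ 2 * u)‖ ^ 2 / (4 * (‖x - ξ t‖ ^ 2 * u)))) u := by
  set r := ‖x - ξ t‖ with hrdef
  have hr2 : (0:ℝ) < r ^ 2 := by positivity
  have hc : (0:ℝ) < t / r^2 := div_pos ht0 hr2
  -- step A : reverse time
  have e1 : Fsol N ξ x t = ∫ τ in (0:ℝ)..t, heatKernel N (x - ξ (t - τ)) τ := by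
    rw [Fsol]
    rw [show (∫ s in (0:ℝ)..t, heatKernel N (x - ξ s) (t - s))
        = ∫ s in (0:ℝ)..t, (fun τ => heatKernel N (x - ξ (t - τ)) τ) (t - s) from by
      congr 1; ext s; simp [sub_sub_cancel]]
    rw [intervalIntegral.integral_comp_sub_left (fun τ => heatKernel N (x - ξ (t - τ)) τ) t]
    simp
  -- step B : rescale time
  have e2 := intervalIntegral.integral_comp_mul_left (a := 0) (b := t / r^2) (c := r^2)
    (fun τ => heatKernel N (x - ξ (t - τ)) τ) (ne_of_gt hr2)
  rw [mul_zero, mul_div_cancel₀ _ (ne_of_gt hr2)] at e2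
  have e3 : Fsol N ξ x t
      = r^2 * ∫ u in (0:ℝ)..(t / r^2), heatKernel N (x - ξ (t - r^2*u)) (r^2*u) := by
    rw [e1, ← smul_eq_mul, eq_comm]
    rw [show (∫ u in (0:ℝ)..(t / r^2), heatKernel N (x - ξ (t - r^2*u)) (r^2*u))
        = ∫ u in (0:ℝ)..(t / r^2), (fun τ => heatKernel N (x - ξ (t - τ)) τ) (r^2 * u) from rfl,
      e2, smul_smul, mul_inv_cancel₀ (ne_of_gt hr2), one_smul]
  rw [e3, ← mul_assoc, ← intervalIntegral.integral_const_mul]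
  rw [intervalIntegral.integral_of_le hc.le]
  -- convert RHS : indicator integral over Ioi 0 equals integral over Ioc
  rw [integral_indicator measurableSet_Ioc, Measure.restrict_restrict measurableSet_Ioc,
    Set.inter_eq_self_of_subset_left Ioc_subset_Ioi_self]
  apply setIntegral_congr_fun measurableSet_Ioc
  intro u hu
  exact heatKernel_rescale hx hu.1 _


/-- Proposition 4.4: for N ≥ 3 and ξ Hölder with exponent α > 1/2,
F(x,t) ~ (1/(N(N-2)ω_N)) |x-ξ(t)|^{2-N} as x → ξ(t). -/
theorem Fsol_asymptotics {N : ℕ} (hN : 3 ≤ N) (T α L : ℝ) (hT : 0 < T)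
    (hα : 1 / 2 < α) (hL : 0 < L)
    (ξ : ℝ → EuclideanSpace ℝ (Fin N))
    (hHolder : ∀ a ∈ Icc (0 : ℝ) T, ∀ b ∈ Icc (0 : ℝ) T, ‖ξ a - ξ b‖ ≤ L * |a - b| ^ α)
    (t : ℝ) (ht : t ∈ Ioo (0 : ℝ) T) :
    Tendsto (fun x : EuclideanSpace ℝ (Fin N) =>
        ‖x - ξ t‖ ^ ((N : ℝ) - 2) * Fsol N ξ x t)
      (nhdsWithin (ξ t) {x | x ≠ ξ t})
      (nhds (1 / ((N : ℝ) * ((N : ℝ) - 2)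
        * (volume (ball (0 : EuclideanSpace ℝ (Fin N)) 1)).toReal))) := by
  obtain ⟨ht0, htT⟩ := ht
  have hNr : (3:ℝ) ≤ (N:ℝ) := by exact_mod_cast hN
  have h2α : (0:ℝ) < 2*α - 1 := by linarith
  have hαpos : (0:ℝ) < α := by linarith
  set l : Filter _ := nhdsWithin (ξ t) {x | x ≠ ξ t} with hl
  have hξc : ContinuousOn ξ (Icc 0 T) := holder_continuousOn hαpos ξ hHolder
  have hrt : Tendsto (fun x => ‖x - ξ t‖) l (𝓝 0) := by
    have hcont : Continuous fun x : EuclideanSpace ℝ (Fin N) => ‖x - ξ t‖ :=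
      (continuous_id.sub continuous_const).norm
    have h0 := hcont.tendsto (ξ t)
    rw [sub_self, norm_zero] at h0
    exact h0.mono_left nhdsWithin_le_nhds
  have hrpos : ∀ᶠ x in l, 0 < ‖x - ξ t‖ := by
    filter_upwards [eventually_mem_nhdsWithin] with x hx
    exact norm_pos_iff.mpr (sub_ne_zero.mpr hx)
  have hsmall : ∀ᶠ x in l, L * ‖x - ξ t‖ ^ (2*α - 1) ≤ 1/2 := by
    have hcAt : ContinuousAt (fun c : ℝ => c ^ (2*α - 1)) 0 :=
      Real.continuousAt_rpow_const 0 _ (Or.inr h2α.le)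
    have h1 : Tendsto (fun x => L * ‖x - ξ t‖ ^ (2*α - 1)) l (𝓝 (L * (0:ℝ) ^ (2*α-1))) :=
      (hcAt.tendsto.comp hrt).const_mul L
    rw [Real.zero_rpow h2α.ne', mul_zero] at h1
    exact h1.eventually_le_const (by norm_num)
  have key : ∀ᶠ x in l, ‖x - ξ t‖ ^ ((N : ℝ) - 2) * Fsol N ξ x t
      = ∫ u in Ioi (0:ℝ), Set.indicator (Ioc (0:ℝ) (t / ‖x - ξ t‖ ^ 2))
          (fun u => (4*π*u) ^ (-(N:ℝ)/2) *
            Real.exp (-‖x - ξ (t - ‖x - ξ t‖ ^ 2 * u)‖ ^ 2 / (4 * (‖x - ξ t‖ ^ 2 * u)))) u := by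
    filter_upwards [hrpos] with x hx
    exact Fsol_rescaled ξ ht0 hx
  rw [← heat_time_integral hN]
  have hmain : Tendsto (fun x => ∫ u in Ioi (0:ℝ),
      Set.indicator (Ioc (0:ℝ) (t / ‖x - ξ t‖ ^ 2))
        (fun u => (4*π*u) ^ (-(N:ℝ)/2) *
          Real.exp (-‖x - ξ (t - ‖x - ξ t‖ ^ 2 * u)‖ ^ 2 / (4 * (‖x - ξ t‖ ^ 2 * u)))) u) l
      (𝓝 (∫ u in Ioi (0:ℝ), (4 * π * u) ^ (-(N : ℝ) / 2) * Real.exp (-1 / (4 * u)))) := by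
    apply tendsto_integral_filter_of_dominated_convergence
      (bound := fun u => (4*π*u) ^ (-(N:ℝ)/2) * (if u ≤ 1 then Real.exp (-1/(16*u)) else 1))
    · -- measurability
      filter_upwards [hrpos] with x hx
      rw [aestronglyMeasurable_indicator_iff measurableSet_Ioc,
        Measure.restrict_restrict measurableSet_Ioc,
        Set.inter_eq_self_of_subset_left Ioc_subset_Ioi_self]
      have hr2 : (0:ℝ) < ‖x - ξ t‖^2 := by positivity
      apply ContinuousOn.aestronglyMeasurable _ measurableSet_Ioc
      apply ContinuousOn.mul
      · apply ContinuousOn.rpow_const (continuous_const.mul continuous_id).continuousOn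
        intro u hu; left
        have hu0 : (0:ℝ) < u := hu.1
        simp only [Pi.mul_apply, id_eq]
        positivity
      · apply Real.continuous_exp.comp_continuousOn
        apply ContinuousOn.div
        · apply ContinuousOn.neg
          apply ContinuousOn.pow
          apply ContinuousOn.norm
          apply ContinuousOn.sub continuousOn_const
          apply hξc.comp
            (continuous_const.sub (continuous_const.mul continuous_id)).continuousOn
          intro u hu
          have hu0 : (0:ℝ) < u := hu.1
          have hur : u * ‖x - ξ t‖^2 ≤ t := (le_div_iff₀ hr2).mp hu.2
          have hcomm : ‖x - ξ t‖^2 * u = u * ‖x - ξ t‖^2 := mul_comm _ _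
          have hprod : 0 < ‖x - ξ t‖^2 * u := by positivity
          refine ⟨?_, ?_⟩ <;> simp only [Pi.sub_apply, Pi.mul_apply, id_eq] <;> linarith
        · exact (continuous_const.mul (continuous_const.mul continuous_id)).continuousOn
        · intro u hu
          have hu0 : (0:ℝ) < u := hu.1
          positivity
    · -- domination
      filter_upwards [hrpos, hsmall] with x hx hs
      rw [ae_restrict_iff' measurableSet_Ioi]
      refine Eventually.of_forall fun u hu => ?_
      have hu0' : (0:ℝ) < u := hu
      have hr2 : (0:ℝ) < ‖x - ξ t‖^2 := by positivity
      by_cases hmem : u ∈ Ioc (0:ℝ) (t / ‖x - ξ t‖^2)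
      · rw [Set.indicator_of_mem hmem]
        have hu0 : (0:ℝ) < u := hmem.1
        rw [Real.norm_eq_abs, abs_of_nonneg (by positivity)]
        apply mul_le_mul_of_nonneg_left _ (rpow_nonneg (by positivity) _)
        split_ifs with hu1
        · -- u ≤ 1
          apply Real.exp_le_exp.mpr
          rw [neg_div, show (-1:ℝ)/(16*u) = -(1/(16*u)) by ring, neg_le_neg_iff]
          have hur : u * ‖x - ξ t‖^2 ≤ t := (le_div_iff₀ hr2).mp hmem.2
          have hcomm : ‖x - ξ t‖^2 * u = u * ‖x - ξ t‖^2 := mul_comm _ _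
          have hprod : 0 < ‖x - ξ t‖^2 * u := by positivity
          have hmem2 : t - ‖x - ξ t‖^2*u ∈ Icc (0:ℝ) T := ⟨by linarith, by linarith⟩
          have hHo := hHolder t ⟨ht0.le, htT.le⟩ _ hmem2
          rw [show t - (t - ‖x - ξ t‖^2*u) = ‖x - ξ t‖^2*u by ring,
            abs_of_nonneg hprod.le] at hHo
          have hpow : (‖x - ξ t‖^2*u) ^ α = ‖x - ξ t‖ ^ (2*α) * u ^ α := by
            rw [mul_rpow (by positivity) hu0.le, ← rpow_natCast ‖x - ξ t‖ 2,
              ← rpow_mul (norm_nonneg _)]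
            norm_num
          have huα : u ^ α ≤ 1 := rpow_le_one hu0.le hu1 hαpos.le
          have hr2α : ‖x - ξ t‖ ^ (2*α) = ‖x - ξ t‖ ^ (2*α - 1) * ‖x - ξ t‖ := by
            rw [← Real.rpow_add_one (ne_of_gt hx) (2*α - 1)]
            congr 1; ring
          have hkey : ‖ξ t - ξ (t - ‖x - ξ t‖^2*u)‖ ≤ ‖x - ξ t‖/2 := by
            calc ‖ξ t - ξ (t - ‖x - ξ t‖^2*u)‖ ≤ L * (‖x - ξ t‖^2*u)^α := hHo
              _ = L * ‖x - ξ t‖^(2*α-1) * ‖x - ξ t‖ * u^α := by rw [hpow, hr2α]; ring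
              _ ≤ (1/2) * ‖x - ξ t‖ * 1 := by
                  apply mul_le_mul _ huα (rpow_nonneg hu0.le _) (by positivity)
                  exact mul_le_mul_of_nonneg_right hs hx.le
              _ = ‖x - ξ t‖/2 := by ring
          have hlow : ‖x - ξ t‖/2 ≤ ‖x - ξ (t - ‖x - ξ t‖^2*u)‖ := by
            have htri : ‖x - ξ t‖ ≤ ‖x - ξ (t - ‖x - ξ t‖^2*u)‖
                + ‖ξ (t - ‖x - ξ t‖^2*u) - ξ t‖ := by
              calc ‖x - ξ t‖
                  = ‖(x - ξ (t - ‖x - ξ t‖^2*u)) + (ξ (t - ‖x - ξ t‖^2*u) - ξ t)‖ := by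
                    congr 1; abel
                _ ≤ _ := norm_add_le _ _
            have hrev : ‖ξ (t - ‖x - ξ t‖^2*u) - ξ t‖ = ‖ξ t - ξ (t - ‖x - ξ t‖^2*u)‖ :=
              norm_sub_rev _ _
            linarith
          have hsq : (‖x - ξ t‖/2)^2 ≤ ‖x - ξ (t - ‖x - ξ t‖^2*u)‖^2 :=
            pow_le_pow_left₀ (by positivity) hlow 2
          calc 1/(16*u) = (‖x - ξ t‖/2)^2 / (4*(‖x - ξ t‖^2*u)) := by
                field_simp
                ring
            _ ≤ _ := by gcongr
        · rw [Real.exp_le_one_iff, neg_div]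
          exact neg_nonpos.mpr (by positivity)
      · rw [Set.indicator_of_notMem hmem, norm_zero]
        apply mul_nonneg (rpow_nonneg (by positivity) _)
        split_ifs
        exacts [Real.exp_nonneg _, zero_le_one]
    · exact bound_integrable hN
    · -- pointwise limit
      rw [ae_restrict_iff' measurableSet_Ioi]
      refine Eventually.of_forall fun u hu => ?_
      have hu0 : (0:ℝ) < u := hu
      have hr2t : Tendsto (fun x => ‖x - ξ t‖^2 * u) l (𝓝 0) := by
        have h1 := (hrt.mul hrt).mul_const u
        simpa [pow_two] using h1
      have hev : ∀ᶠ x in l, ‖x - ξ t‖^2 * u < t := hr2t.eventually_lt_const ht0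
      have hb0 : Tendsto (fun x => L * ‖x - ξ t‖ ^ (2*α-1) * u^α) l (𝓝 0) := by
        have hcAt : ContinuousAt (fun c : ℝ => c ^ (2*α - 1)) 0 :=
          Real.continuousAt_rpow_const 0 _ (Or.inr h2α.le)
        have h1 := ((hcAt.tendsto.comp hrt).const_mul L).mul_const (u^α)
        rw [Real.zero_rpow h2α.ne', mul_zero, zero_mul] at h1
        exact h1
      have habs : ∀ᶠ x in l, |‖x - ξ (t - ‖x - ξ t‖^2*u)‖ - ‖x - ξ t‖|
          ≤ L * ‖x - ξ t‖ ^ (2*α-1) * u^α * ‖x - ξ t‖ := by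
        filter_upwards [hrpos, hev] with x hx hxe
        have hprod : 0 < ‖x - ξ t‖^2 * u := by positivity
        have hmem2 : t - ‖x - ξ t‖^2*u ∈ Icc (0:ℝ) T := ⟨by linarith, by linarith⟩
        have hHo := hHolder t ⟨ht0.le, htT.le⟩ _ hmem2
        rw [show t - (t - ‖x - ξ t‖^2*u) = ‖x - ξ t‖^2*u by ring,
          abs_of_nonneg hprod.le] at hHo
        have hpow : (‖x - ξ t‖^2*u) ^ α = ‖x - ξ t‖ ^ (2*α) * u ^ α := by
          rw [mul_rpow (by positivity) hu0.le, ← rpow_natCast ‖x - ξ t‖ 2,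
            ← rpow_mul (norm_nonneg _)]
          norm_num
        have hr2α : ‖x - ξ t‖ ^ (2*α) = ‖x - ξ t‖ ^ (2*α - 1) * ‖x - ξ t‖ := by
          rw [← Real.rpow_add_one (ne_of_gt hx) (2*α - 1)]
          congr 1; ring
        calc |‖x - ξ (t - ‖x - ξ t‖^2*u)‖ - ‖x - ξ t‖|
            ≤ ‖(x - ξ (t - ‖x - ξ t‖^2*u)) - (x - ξ t)‖ := abs_norm_sub_norm_le _ _
          _ = ‖ξ t - ξ (t - ‖x - ξ t‖^2*u)‖ := by congr 1; abel
          _ ≤ L * (‖x - ξ t‖^2*u)^α := hHo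
          _ = L * ‖x - ξ t‖ ^ (2*α-1) * u^α * ‖x - ξ t‖ := by rw [hpow, hr2α]; ring
      have hD : Tendsto (fun x => ‖x - ξ (t - ‖x - ξ t‖^2*u)‖ / ‖x - ξ t‖) l (𝓝 1) := by
        apply tendsto_of_tendsto_of_tendsto_of_le_of_le'
          (g := fun x => 1 - L * ‖x - ξ t‖ ^ (2*α-1) * u^α)
          (h := fun x => 1 + L * ‖x - ξ t‖ ^ (2*α-1) * u^α)
        · simpa using tendsto_const_nhds.sub hb0
        · simpa using tendsto_const_nhds.add hb0
        · filter_upwards [hrpos, habs] with x hx hax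
          rw [le_div_iff₀ hx]
          have h1 := (abs_le.mp hax).1
          have hexp : (1 - L * ‖x - ξ t‖ ^ (2*α-1) * u^α) * ‖x - ξ t‖
              = ‖x - ξ t‖ - L * ‖x - ξ t‖ ^ (2*α-1) * u^α * ‖x - ξ t‖ := by ring
          linarith
        · filter_upwards [hrpos, habs] with x hx hax
          rw [div_le_iff₀ hx]
          have h1 := (abs_le.mp hax).2
          have hexp : (1 + L * ‖x - ξ t‖ ^ (2*α-1) * u^α) * ‖x - ξ t‖
              = ‖x - ξ t‖ + L * ‖x - ξ t‖ ^ (2*α-1) * u^α * ‖x - ξ t‖ := by ring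
          linarith
      have hQ : Tendsto (fun x => ‖x - ξ (t - ‖x - ξ t‖^2*u)‖^2 / (4*(‖x - ξ t‖^2*u))) l
          (𝓝 (1/(4*u))) := by
        have h1 := (hD.mul hD).mul_const (1/(4*u))
        rw [one_mul, one_mul] at h1
        apply h1.congr'
        filter_upwards [hrpos] with x hx
        field_simp
      have hfin : Tendsto (fun x => (4*π*u) ^ (-(N:ℝ)/2) *
          Real.exp (-(‖x - ξ (t - ‖x - ξ t‖^2*u)‖^2 / (4*(‖x - ξ t‖^2*u))))) l
          (𝓝 ((4*π*u) ^ (-(N:ℝ)/2) * Real.exp (-(1/(4*u))))) :=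
        ((Real.continuous_exp.tendsto _).comp hQ.neg).const_mul _
      rw [show (-1:ℝ)/(4*u) = -(1/(4*u)) by ring]
      apply hfin.congr'
      filter_upwards [hrpos, hev] with x hx hxe
      have hr2 : (0:ℝ) < ‖x - ξ t‖^2 := by positivity
      have hmem : u ∈ Ioc (0:ℝ) (t / ‖x - ξ t‖^2) := by
        constructor
        · exact hu0
        · rw [le_div_iff₀ hr2, mul_comm]
          exact le_of_lt hxe
      rw [Set.indicator_of_mem hmem,
        neg_div (4 * (‖x - ξ t‖ ^ 2 * u)) (‖x - ξ (t - ‖x - ξ t‖ ^ 2 * u)‖ ^ 2)]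
  exact hmain.congr' (key.mono fun x hx => hx.symm)
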